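/- For $n \ge 2$, the measure $\sigma$ on the path graph $L_n$ defined by $\sigma(j) = \sin\big(\frac{j\pi}{n+1}\big)$ satisfies $\max_{1\le j\le n} \frac{\sigma(B(j,1))}{\sigma(j)} = 1 + 2\cos\big(\frac{\pi}{n+1}\big)$. -/

import Mathlib

open Finset Real

/-- The closed ball of center `j` and radius `k` in the path graph `L_n` on `{1,…,n}`. -/
def lball (n j k : ℕ) : Finset ℕ :=
  (Finset.Icc 1 n).filter fun i => j - k ≤ i ∧ i ≤ j + k

/-- For `n ≥ 2`, the measure `σ(j) = sin(jπ/(n+1))` on the path graph `L_n` satisfies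
`max_{1 ≤ j ≤ n} σ(B(j,1))/σ(j) = 1 + 2 cos(π/(n+1))`. -/
theorem stmt_4 (n : ℕ) (hn : 2 ≤ n) :
    sSup {x | ∃ j ∈ Finset.Icc 1 n,
        x = (∑ l ∈ lball n j 1, Real.sin (l * π / (n + 1))) / Real.sin (j * π / (n + 1))}
      = 1 + 2 * Real.cos (π / (n + 1)) := by
  have hn1 : (0:ℝ) < (n:ℝ) + 1 := by positivity
  set θ : ℝ := π / (n + 1) with hθ
  have hcast : ∀ l : ℕ, (l:ℝ) * π / (n + 1) = (l:ℝ) * θ := by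
    intro l; rw [hθ]; ring
  have htrig : ∀ a : ℝ, Real.sin (a - θ) + Real.sin (a + θ) = 2 * Real.sin a * Real.cos θ := by
    intro a; rw [Real.sin_add, Real.sin_sub]; ring
  have hsinpos : ∀ j ∈ Finset.Icc 1 n, 0 < Real.sin ((j:ℝ) * π / (n + 1)) := by
    intro j hj
    simp only [Finset.mem_Icc] at hj
    rw [hcast]
    apply Real.sin_pos_of_pos_of_lt_pi
    · have : (0:ℝ) < (j:ℝ) := by exact_mod_cast hj.1
      have : 0 < θ := by rw [hθ]; positivity
      positivity
    · have hjlt : (j:ℝ) < (n:ℝ) + 1 := by exact_mod_cast Nat.lt_succ_of_le hj.2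
      have hπ := Real.pi_pos
      calc (j:ℝ) * (π / ((n:ℝ) + 1)) < ((n:ℝ) + 1) * (π / ((n:ℝ) + 1)) :=
            mul_lt_mul_of_pos_right hjlt (by positivity)
        _ = π := by field_simp
  have key : ∀ j ∈ Finset.Icc 1 n,
      (∑ l ∈ lball n j 1, Real.sin ((l:ℝ) * π / (n + 1)))
        = Real.sin ((j:ℝ) * π / (n + 1)) * (1 + 2 * Real.cos (π / (n + 1))) := by
    intro j hj
    simp only [Finset.mem_Icc] at hj
    obtain ⟨hj1, hjn⟩ := hj
    by_cases h1 : j = 1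
    · subst h1
      have hb : lball n 1 1 = {1, 2} := by
        ext i; simp [lball, Finset.mem_Icc]; omega
      rw [hb, Finset.sum_pair (by norm_num)]
      have h2 : ((2:ℕ):ℝ) * π / (n + 1) = 2 * θ := by push_cast [hθ]; ring
      rw [hcast, h2, Real.sin_two_mul]
      push_cast; rw [hθ]; ring
    · by_cases h2 : j = n
      · rw [h2]
        have hb : lball n n 1 = {n - 1, n} := by
          ext i; simp [lball, Finset.mem_Icc]; omega
        rw [hb, Finset.sum_pair (by omega)]
        have hc : ((n - 1 : ℕ):ℝ) = (n:ℝ) - 1 := by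
          push_cast [Nat.cast_sub (by omega : 1 ≤ n)]; ring
        rw [hcast, hcast, hc]
        have h0 : Real.sin ((n:ℝ) * θ + θ) = 0 := by
          have : (n:ℝ) * θ + θ = π := by rw [hθ]; field_simp
          rw [this, Real.sin_pi]
        have := htrig ((n:ℝ) * θ)
        have hsub : ((n:ℝ) - 1) * θ = (n:ℝ) * θ - θ := by ring
        rw [hsub]
        nlinarith [this, h0]
      · have hj2 : 2 ≤ j := by omega
        have hjn' : j + 1 ≤ n := by omega
        have hb : lball n j 1 = {j - 1, j, j + 1} := by
          ext i; simp [lball, Finset.mem_Icc]; omega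
        rw [hb]
        rw [Finset.sum_insert (by simp; omega), Finset.sum_pair (by omega)]
        have hc : ((j - 1 : ℕ):ℝ) = (j:ℝ) - 1 := by
          push_cast [Nat.cast_sub (by omega : 1 ≤ j)]; ring
        rw [hcast, hcast, hcast, hc]
        push_cast
        have hsub : ((j:ℝ) - 1) * θ = (j:ℝ) * θ - θ := by ring
        have hadd : ((j:ℝ) + 1) * θ = (j:ℝ) * θ + θ := by ring
        rw [hsub, hadd]
        have := htrig ((j:ℝ) * θ)
        nlinarith [this]
  have hset : {x | ∃ j ∈ Finset.Icc 1 n,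
        x = (∑ l ∈ lball n j 1, Real.sin ((l:ℝ) * π / (n + 1))) / Real.sin ((j:ℝ) * π / (n + 1))}
      = {1 + 2 * Real.cos (π / (n + 1))} := by
    ext x
    simp only [Set.mem_setOf_eq, Set.mem_singleton_iff]
    constructor
    · rintro ⟨j, hj, rfl⟩
      rw [key j hj, mul_comm, mul_div_assoc, div_self (ne_of_gt (hsinpos j hj)), mul_one]
    · rintro rfl
      refine ⟨1, by simp [Finset.mem_Icc]; omega, ?_⟩
      have hs := ne_of_gt (hsinpos 1 (by simp [Finset.mem_Icc]; omega))
      rw [key 1 (by simp [Finset.mem_Icc]; omega), mul_div_cancel_left₀ _ hs]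
  rw [hset, csSup_singleton]
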